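/- arXiv:1310.1159 — 3 statements merged into one kernel-verified Lean document; each statement's English description precedes it below -/
import Mathlib

section
/- Let R be a ring. Consider a commutative square of chain complexes of R-modules with maps g : W → E, f : X → B, i : W → X, p : E → B satisfying p ∘ g = f ∘ i, where i is a degreewise split monomorphism and p is a degreewise split epimorphism. If i or p is a homotopy equivalence, then there exists a chain map λ : X → E with λ ∘ i = g and p ∘ λ = f. -/
open CategoryTheory

variable (R : Type) [Ring R]

/-- Concrete chain homotopy from `u` to `v`: `d ∘ sₙ + sₙ₋₁ ∘ d = uₙ - vₙ`. -/
def IsHomotopy {X Y : ChainComplex (ModuleCat R) ℤ} (u v : X ⟶ Y)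
    (s : ∀ n : ℤ, X.X n ⟶ Y.X (n + 1)) : Prop :=
  ∀ n : ℤ, s n ≫ Y.d (n + 1) n +
      X.d n (n - 1) ≫ s (n - 1) ≫ eqToHom (congrArg Y.X (show n - 1 + 1 = n by omega)) =
    u.f n - v.f n

/-- Two chain maps are chain homotopic. -/
def Homotopic {X Y : ChainComplex (ModuleCat R) ℤ} (u v : X ⟶ Y) : Prop :=
  ∃ s, IsHomotopy R u v s

/-- A chain map is a homotopy equivalence: it admits an inverse up to chain homotopy. -/
def IsHtpyEquiv {X Y : ChainComplex (ModuleCat R) ℤ} (f : X ⟶ Y) : Prop :=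
  ∃ g : Y ⟶ X, Homotopic R (f ≫ g) (𝟙 X) ∧ Homotopic R (g ≫ f) (𝟙 Y)

/-- Degreewise split monomorphism: each `iₙ` admits an `R`-linear retraction. -/
def DegSplitMono {W Y : ChainComplex (ModuleCat R) ℤ} (i : W ⟶ Y) : Prop :=
  ∀ n : ℤ, ∃ r : Y.X n →ₗ[R] W.X n, ∀ w : W.X n, r (i.f n w) = w

/-- Degreewise split epimorphism: each `pₙ` admits an `R`-linear section. -/
def DegSplitEpi {E B : ChainComplex (ModuleCat R) ℤ} (p : E ⟶ B) : Prop :=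
  ∀ n : ℤ, ∃ s : B.X n →ₗ[R] E.X n, ∀ b : B.X n, p.f n (s b) = b

namespace Statement4Aux

variable {R}
variable {V X Y Z : ChainComplex (ModuleCat R) ℤ}

/-- `d ∘ s`. -/
def DS (s : ∀ n : ℤ, X.X n ⟶ Y.X (n + 1)) (n : ℤ) : X.X n ⟶ Y.X n :=
  s n ≫ Y.d (n + 1) n

/-- `s ∘ d`. -/
def SD (s : ∀ n : ℤ, X.X n ⟶ Y.X (n + 1)) (n : ℤ) : X.X n ⟶ Y.X n :=
  X.d n (n - 1) ≫ s (n - 1) ≫ eqToHom (congrArg Y.X (show n - 1 + 1 = n by omega))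

lemma isHomotopy_iff (u v : X ⟶ Y) (s : ∀ n : ℤ, X.X n ⟶ Y.X (n + 1)) :
    IsHomotopy R u v s ↔ ∀ n, DS s n + SD s n = u.f n - v.f n := Iff.rfl

lemma SD_eq (s : ∀ n : ℤ, X.X n ⟶ Y.X (n + 1)) {m n : ℤ} (h : m + 1 = n) :
    SD s n = X.d n m ≫ s m ≫ eqToHom (congrArg Y.X h) := by
  obtain rfl : m = n - 1 := by omega
  rfl

lemma f_eqToHom (ψ : Y ⟶ Z) {a b : ℤ} (h : a = b) :
    ψ.f a ≫ eqToHom (congrArg Z.X h) = eqToHom (congrArg Y.X h) ≫ ψ.f b := by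
  subst h; simp

lemma DS_post (s : ∀ n : ℤ, X.X n ⟶ Y.X (n + 1)) (ψ : Y ⟶ Z) (n : ℤ) :
    DS (fun k => s k ≫ ψ.f (k + 1)) n = DS s n ≫ ψ.f n := by
  simp only [DS, Category.assoc, ψ.comm]

lemma SD_post (s : ∀ n : ℤ, X.X n ⟶ Y.X (n + 1)) (ψ : Y ⟶ Z) (n : ℤ) :
    SD (fun k => s k ≫ ψ.f (k + 1)) n = SD s n ≫ ψ.f n := by
  simp only [SD, Category.assoc]
  rw [f_eqToHom ψ (show n - 1 + 1 = n by omega)]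

lemma DS_pre (s : ∀ n : ℤ, X.X n ⟶ Y.X (n + 1)) (φ : V ⟶ X) (n : ℤ) :
    DS (fun k => φ.f k ≫ s k) n = φ.f n ≫ DS s n := by
  simp only [DS, Category.assoc]

lemma SD_pre (s : ∀ n : ℤ, X.X n ⟶ Y.X (n + 1)) (φ : V ⟶ X) (n : ℤ) :
    SD (fun k => φ.f k ≫ s k) n = φ.f n ≫ SD s n := by
  simp only [SD, Category.assoc]
  rw [← HomologicalComplex.Hom.comm_assoc]

lemma DS_sub (s t : ∀ n : ℤ, X.X n ⟶ Y.X (n + 1)) (n : ℤ) :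
    DS (fun k => s k - t k) n = DS s n - DS t n := by
  simp [DS, Preadditive.sub_comp]

lemma SD_sub (s t : ∀ n : ℤ, X.X n ⟶ Y.X (n + 1)) (n : ℤ) :
    SD (fun k => s k - t k) n = SD s n - SD t n := by
  simp [SD, Preadditive.sub_comp, Preadditive.comp_sub]

lemma DS_zero (n : ℤ) : DS (fun k => (0 : X.X k ⟶ Y.X (k + 1))) n = 0 := by
  simp [DS]

lemma SD_zero (n : ℤ) : SD (fun k => (0 : X.X k ⟶ Y.X (k + 1))) n = 0 := by
  simp [SD]

lemma DS_conj (s : ∀ n : ℤ, X.X n ⟶ Y.X (n + 1)) (φ : V ⟶ X) (ψ : Y ⟶ Z) (n : ℤ) :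
    DS (fun k => -(φ.f k ≫ s k ≫ ψ.f (k + 1))) n = -(φ.f n ≫ DS s n ≫ ψ.f n) := by
  simp only [DS, Preadditive.neg_comp, Category.assoc, ψ.comm]

lemma SD_conj (s : ∀ n : ℤ, X.X n ⟶ Y.X (n + 1)) (φ : V ⟶ X) (ψ : Y ⟶ Z) (n : ℤ) :
    SD (fun k => -(φ.f k ≫ s k ≫ ψ.f (k + 1))) n = -(φ.f n ≫ SD s n ≫ ψ.f n) := by
  simp only [SD, Preadditive.neg_comp, Preadditive.comp_neg, Category.assoc]
  rw [f_eqToHom ψ (show n - 1 + 1 = n by omega), ← HomologicalComplex.Hom.comm_assoc]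

/-- For any degree `+1` family `s`, `d ∘ s + s ∘ d` is a chain map. -/
def Hmap (s : ∀ n : ℤ, X.X n ⟶ Y.X (n + 1)) : X ⟶ Y where
  f n := DS s n + SD s n
  comm' := by
    rintro n m (rfl : m + 1 = n)
    have h1 : DS s (m + 1) ≫ Y.d (m + 1) m = 0 := by
      simp [DS, Category.assoc]
    have h3 : SD s (m + 1) ≫ Y.d (m + 1) m = X.d (m + 1) m ≫ DS s m := by
      rw [SD_eq s (rfl : m + 1 = m + 1)]
      simp [DS]
    have h2 : X.d (m + 1) m ≫ SD s m = 0 := by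
      rw [SD_eq s (show m - 1 + 1 = m by omega), ← Category.assoc,
        HomologicalComplex.d_comp_d, Limits.zero_comp]
    rw [Preadditive.add_comp, Preadditive.comp_add, h1, h2, h3, zero_add, add_zero]

@[simp] lemma Hmap_f (s : ∀ n : ℤ, X.X n ⟶ Y.X (n + 1)) (n : ℤ) :
    (Hmap s).f n = DS s n + SD s n := rfl

end Statement4Aux

open Statement4Aux HomologicalComplex

/-- Lifting in a square with a degreewise split mono on the left, a degreewise split epi on the
right, one of which is a homotopy equivalence. -/
theorem statement4 (R : Type) [Ring R] {W X E B : ChainComplex (ModuleCat R) ℤ}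
    (i : W ⟶ X) (p : E ⟶ B) (g : W ⟶ E) (f : X ⟶ B)
    (hsq : g ≫ p = i ≫ f)
    (hi : DegSplitMono R i) (hp : DegSplitEpi R p)
    (h : IsHtpyEquiv R i ∨ IsHtpyEquiv R p) :
    ∃ l : X ⟶ E, i ≫ l = g ∧ l ≫ p = f := by
  have hsq' : ∀ n, g.f n ≫ p.f n = i.f n ≫ f.f n := fun n => by
    rw [← comp_f, hsq, comp_f]
  have hsq'' : ∀ n {Z : ModuleCat R} (w : B.X n ⟶ Z),
      g.f n ≫ p.f n ≫ w = i.f n ≫ f.f n ≫ w := by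
    intro n Z w
    rw [← Category.assoc, hsq' n, Category.assoc]
  choose ρ hρ0 using hi
  choose σ hσ0 using hp
  have hρ : ∀ n {Z : ModuleCat R} (w : W.X n ⟶ Z),
      i.f n ≫ (ModuleCat.ofHom (ρ n) : X.X n ⟶ W.X n) ≫ w = w := by
    intro n Z w
    have h1 : i.f n ≫ (ModuleCat.ofHom (ρ n) : X.X n ⟶ W.X n) = 𝟙 (W.X n) := by
      ext x; exact hρ0 n x
    rw [← Category.assoc, h1, Category.id_comp]
  have hσ1 : ∀ n, (ModuleCat.ofHom (σ n) : B.X n ⟶ E.X n) ≫ p.f n = 𝟙 (B.X n) := by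
    intro n; ext x; exact hσ0 n x
  have hσ : ∀ n {Z : ModuleCat R} (w : B.X n ⟶ Z),
      (ModuleCat.ofHom (σ n) : B.X n ⟶ E.X n) ≫ p.f n ≫ w = w := by
    intro n Z w
    rw [← Category.assoc, hσ1 n, Category.id_comp]
  rcases h with hie | hpe
  · -- `i` is a homotopy equivalence
    obtain ⟨j, ⟨u, hu⟩, ⟨v, hv⟩⟩ := hie
    rw [isHomotopy_iff] at hu hv
    simp only [comp_f, id_f] at hu hv
    set sρ : ∀ n : ℤ, X.X n ⟶ W.X (n + 1) :=
      fun n => (ModuleCat.ofHom (ρ n) : X.X n ⟶ W.X n) ≫ u n with hsρ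
    set T : X ⟶ W := Hmap sρ with hT
    have hiT : ∀ n, i.f n ≫ T.f n = i.f n ≫ j.f n - 𝟙 (W.X n) := by
      intro n
      have e1 : i.f n ≫ DS sρ n = DS u n := by
        simp only [DS, hsρ, Category.assoc]
        rw [hρ]
      have e2 : i.f n ≫ SD sρ n = SD u n := by
        simp only [SD, hsρ, Category.assoc]
        rw [HomologicalComplex.Hom.comm_assoc, hρ]
      rw [hT, Hmap_f, Preadditive.comp_add, e1, e2, hu n]
    set r : X ⟶ W := j - T with hr
    have hri : ∀ n {Z : ModuleCat R} (w : W.X n ⟶ Z), i.f n ≫ r.f n ≫ w = w := by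
      intro n Z w
      have h1 : i.f n ≫ r.f n = 𝟙 (W.X n) := by
        rw [hr]
        simp only [sub_f_apply, Preadditive.comp_sub, hiT]
        abel
      rw [← Category.assoc, h1, Category.id_comp]
    set q : X ⟶ X := 𝟙 X - r ≫ i with hqdef
    have hqf : ∀ n, q.f n = 𝟙 (X.X n) - r.f n ≫ i.f n := by
      intro n; rw [hqdef]; simp
    have hiq : ∀ n, i.f n ≫ q.f n = 0 := by
      intro n
      rw [hqf]
      simp only [Preadditive.comp_sub, Category.comp_id]
      rw [hri n (i.f n), sub_self]
    have hqq2 : ∀ n, q.f n ≫ q.f n = q.f n := by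
      intro n
      rw [hqf]
      simp only [Preadditive.sub_comp, Preadditive.comp_sub, Category.id_comp,
        Category.comp_id, Category.assoc]
      rw [hri n (i.f n)]
      abel
    set H₀ : ∀ n : ℤ, X.X n ⟶ X.X (n + 1) :=
      fun n => v n - sρ n ≫ i.f (n + 1) with hH₀def
    have hH₀ : ∀ n, DS H₀ n + SD H₀ n = r.f n ≫ i.f n - 𝟙 (X.X n) := by
      intro n
      rw [hH₀def, DS_sub v (fun k => sρ k ≫ i.f (k + 1)) n,
        SD_sub v (fun k => sρ k ≫ i.f (k + 1)) n,
        DS_post sρ i n, SD_post sρ i n, hr]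
      simp only [sub_f_apply, hT, Hmap_f, Preadditive.sub_comp, Preadditive.add_comp]
      have hv' : DS v n = j.f n ≫ i.f n - 𝟙 (X.X n) - SD v n := by
        rw [← hv n]; abel
      rw [hv']
      abel
    set H : ∀ n : ℤ, X.X n ⟶ X.X (n + 1) :=
      fun n => -(q.f n ≫ H₀ n ≫ q.f (n + 1)) with hHdef
    have hH : ∀ n, DS H n + SD H n = q.f n := by
      intro n
      rw [hHdef, DS_conj H₀ q q n, SD_conj H₀ q q n, ← neg_add,
        ← Preadditive.comp_add, ← Preadditive.add_comp, hH₀ n]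
      have h2 : r.f n ≫ i.f n - 𝟙 (X.X n) = -q.f n := by rw [hqf]; abel
      rw [h2]
      simp only [Preadditive.comp_neg, Preadditive.neg_comp, neg_neg]
      rw [hqq2 n, hqq2 n]
    have hHi : ∀ n, i.f n ≫ H n = 0 := by
      intro n
      rw [hHdef]
      simp only [Preadditive.comp_neg]
      rw [← Category.assoc, hiq n, Limits.zero_comp, neg_zero]
    set sf : ∀ n : ℤ, X.X n ⟶ E.X (n + 1) :=
      fun n => H n ≫ f.f (n + 1) ≫ (ModuleCat.ofHom (σ (n + 1)) : B.X (n + 1) ⟶ E.X (n + 1)) with hsf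
    refine ⟨r ≫ g + Hmap sf, ?_, ?_⟩
    · ext n : 1
      simp only [comp_f, add_f_apply, Preadditive.comp_add, Hmap_f, Category.assoc]
      rw [← DS_pre sf i n, ← SD_pre sf i n]
      have hz : (fun k => i.f k ≫ sf k) = fun k => (0 : W.X k ⟶ E.X (k + 1)) := by
        funext k
        simp only [hsf]
        rw [← Category.assoc, hHi k, Limits.zero_comp]
      rw [hz, DS_zero, SD_zero, hri n (g.f n)]
      simp
    · ext n : 1
      simp only [comp_f, add_f_apply, Preadditive.add_comp, Hmap_f, Category.assoc]
      rw [← DS_post sf p n, ← SD_post sf p n]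
      have hz : (fun k => sf k ≫ p.f (k + 1)) = fun k => H k ≫ f.f (k + 1) := by
        funext k
        simp only [hsf, Category.assoc]
        rw [hσ1 (k + 1), Category.comp_id]
      rw [hz, DS_post H f n, SD_post H f n, ← Preadditive.add_comp, hH n, hqf n]
      simp only [Preadditive.sub_comp, Category.id_comp, Category.assoc]
      rw [hsq' n]
      abel
  · -- `p` is a homotopy equivalence
    obtain ⟨j, ⟨u, hu⟩, ⟨s, hs⟩⟩ := hpe
    rw [isHomotopy_iff] at hu hs
    simp only [comp_f, id_f] at hu hs
    set sσ : ∀ n : ℤ, B.X n ⟶ E.X (n + 1) :=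
      fun n => s n ≫ (ModuleCat.ofHom (σ (n + 1)) : B.X (n + 1) ⟶ E.X (n + 1)) with hsσ
    set T : B ⟶ E := Hmap sσ with hT
    have hTp : ∀ n, T.f n ≫ p.f n = j.f n ≫ p.f n - 𝟙 (B.X n) := by
      intro n
      have e1 : DS sσ n ≫ p.f n = DS s n := by
        simp only [DS, hsσ, Category.assoc, ← HomologicalComplex.Hom.comm]
        rw [hσ (n + 1)]
      have e2 : SD sσ n ≫ p.f n = SD s n := by
        simp only [SD, hsσ, Category.assoc]
        rw [← f_eqToHom p (show n - 1 + 1 = n by omega), hσ (n - 1 + 1)]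
      rw [hT, Hmap_f, Preadditive.add_comp, e1, e2, hs n]
    set t : B ⟶ E := j - T with ht
    have htp1 : ∀ n, t.f n ≫ p.f n = 𝟙 (B.X n) := by
      intro n
      rw [ht]
      simp only [sub_f_apply, Preadditive.sub_comp, hTp]
      abel
    have htp : ∀ n {Z : ModuleCat R} (w : B.X n ⟶ Z), t.f n ≫ p.f n ≫ w = w := by
      intro n Z w
      rw [← Category.assoc, htp1 n, Category.id_comp]
    set q : E ⟶ E := 𝟙 E - p ≫ t with hqdef
    have hqf : ∀ n, q.f n = 𝟙 (E.X n) - p.f n ≫ t.f n := by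
      intro n; rw [hqdef]; simp
    have hqp : ∀ n, q.f n ≫ p.f n = 0 := by
      intro n
      rw [hqf]
      simp only [Preadditive.sub_comp, Category.id_comp, Category.assoc]
      rw [htp1 n, Category.comp_id, sub_self]
    have hqq2 : ∀ n, q.f n ≫ q.f n = q.f n := by
      intro n
      rw [hqf]
      simp only [Preadditive.sub_comp, Preadditive.comp_sub, Category.id_comp,
        Category.comp_id, Category.assoc]
      rw [htp n (t.f n)]
      abel
    set K₀ : ∀ n : ℤ, E.X n ⟶ E.X (n + 1) :=
      fun n => u n - p.f n ≫ sσ n with hK₀def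
    have hK₀ : ∀ n, DS K₀ n + SD K₀ n = p.f n ≫ t.f n - 𝟙 (E.X n) := by
      intro n
      rw [hK₀def, DS_sub u (fun k => p.f k ≫ sσ k) n,
        SD_sub u (fun k => p.f k ≫ sσ k) n,
        DS_pre sσ p n, SD_pre sσ p n, ht]
      simp only [sub_f_apply, hT, Hmap_f, Preadditive.comp_sub, Preadditive.comp_add]
      have hu' : DS u n = p.f n ≫ j.f n - 𝟙 (E.X n) - SD u n := by
        rw [← hu n]; abel
      rw [hu']
      abel
    set K : ∀ n : ℤ, E.X n ⟶ E.X (n + 1) :=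
      fun n => -(q.f n ≫ K₀ n ≫ q.f (n + 1)) with hKdef
    have hK : ∀ n, DS K n + SD K n = q.f n := by
      intro n
      rw [hKdef, DS_conj K₀ q q n, SD_conj K₀ q q n, ← neg_add,
        ← Preadditive.comp_add, ← Preadditive.add_comp, hK₀ n]
      have h2 : p.f n ≫ t.f n - 𝟙 (E.X n) = -q.f n := by rw [hqf]; abel
      rw [h2]
      simp only [Preadditive.comp_neg, Preadditive.neg_comp, neg_neg]
      rw [hqq2 n, hqq2 n]
    have hKp : ∀ n, K n ≫ p.f (n + 1) = 0 := by
      intro n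
      rw [hKdef]
      simp only [Preadditive.neg_comp, Category.assoc]
      rw [hqp (n + 1)]
      simp
    set sg : ∀ n : ℤ, X.X n ⟶ E.X (n + 1) :=
      fun n => (ModuleCat.ofHom (ρ n) : X.X n ⟶ W.X n) ≫ g.f n ≫ K n with hsg
    refine ⟨f ≫ t + Hmap sg, ?_, ?_⟩
    · ext n : 1
      simp only [comp_f, add_f_apply, Preadditive.comp_add, Hmap_f, Category.assoc]
      rw [← DS_pre sg i n, ← SD_pre sg i n]
      have hz : (fun k => i.f k ≫ sg k) = fun k => g.f k ≫ K k := by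
        funext k
        simp only [hsg]
        rw [hρ k (g.f k ≫ K k)]
      rw [hz, DS_pre K g n, SD_pre K g n, ← Preadditive.comp_add, hK n, hqf n]
      simp only [Preadditive.comp_sub, Category.comp_id]
      rw [hsq'' n (t.f n)]
      abel
    · ext n : 1
      simp only [comp_f, add_f_apply, Preadditive.add_comp, Hmap_f, Category.assoc]
      rw [← DS_post sg p n, ← SD_post sg p n]
      have hz : (fun k => sg k ≫ p.f (k + 1)) = fun k => (0 : X.X k ⟶ B.X (k + 1)) := by
        funext k
        simp only [hsg, Category.assoc]
        rw [hKp k]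
        simp
      rw [hz, DS_zero, SD_zero, htp1 n]
      simp
end

section
/- Let R be a ring. A chain map p : E → B of chain complexes of R-modules satisfies the covering homotopy property — meaning: for every chain complex W, chain maps g : W → E and f : W → B, and chain homotopy s from p ∘ g to f, there exist a chain map g' : W → E with p ∘ g' = f and a chain homotopy s̃ from g to g' such that p ∘ s̃_n = s_n for all n — if and only if p is a degreewise split epimorphism. -/
open CategoryTheory

variable (R : Type) [Ring R]

/-! ### Auxiliary lemmas -/

lemma aux_d_eq {C : ChainComplex (ModuleCat R) ℤ} {a b a' b' : ℤ} (ha : a = a') (hb : b = b') :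
    C.d a b = eqToHom (congrArg C.X ha) ≫ C.d a' b' ≫ eqToHom (congrArg C.X hb.symm) := by
  subst ha; subst hb; simp

lemma aux_t_eq {W E : ChainComplex (ModuleCat R) ℤ} (t : ∀ n : ℤ, W.X n ⟶ E.X (n + 1)) {a b : ℤ}
    (h : a = b) :
    t a = eqToHom (congrArg W.X h) ≫ t b ≫ eqToHom (congrArg E.X (by rw [h])) := by
  subst h; simp

lemma aux_f_eqToHom {C D : ChainComplex (ModuleCat R) ℤ} (u : C ⟶ D) {a b : ℤ} (h : a = b) :
    eqToHom (congrArg C.X h) ≫ u.f b = u.f a ≫ eqToHom (congrArg D.X h) := by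
  subst h; simp

/-- Degreewise component of the test complex `auxW B n`: `B.X n` in degrees `n` and `n-1`,
zero elsewhere. -/
def auxWX (B : ChainComplex (ModuleCat R) ℤ) (n m : ℤ) : ModuleCat R :=
  if m = n ∨ m = n - 1 then B.X n else ModuleCat.of R PUnit

lemma auxWX_eq {B : ChainComplex (ModuleCat R) ℤ} {n m : ℤ} (h : m = n ∨ m = n - 1) :
    auxWX R B n m = B.X n := if_pos h

/-- The test complex: `B.X n` in degrees `n` and `n-1` with identity differential. -/
def auxW (B : ChainComplex (ModuleCat R) ℤ) (n : ℤ) : ChainComplex (ModuleCat R) ℤ where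
  X := auxWX R B n
  d m m' :=
    if h : m = n ∧ m' = n - 1 then
      eqToHom (auxWX_eq R (Or.inl h.1)) ≫ eqToHom (auxWX_eq R (Or.inr h.2)).symm
    else 0
  shape i j hij := by
    rw [dif_neg]
    rintro ⟨rfl, rfl⟩
    exact hij (by simp only [ComplexShape.down_Rel]; omega)
  d_comp_d' i j k _ _ := by
    by_cases h : i = n ∧ j = n - 1
    · rw [dif_pos h, dif_neg (by omega)]
      simp
    · rw [dif_neg h]
      simp

lemma auxW_d_pos {B : ChainComplex (ModuleCat R) ℤ} (n : ℤ) :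
    (auxW R B n).d n (n - 1) =
      eqToHom (auxWX_eq R (Or.inl rfl)) ≫ eqToHom (auxWX_eq R (Or.inr rfl)).symm := by
  simp [auxW]

lemma auxW_d_neg {B : ChainComplex (ModuleCat R) ℤ} (n : ℤ) {i j : ℤ}
    (h : ¬(i = n ∧ j = n - 1)) : (auxW R B n).d i j = 0 := by
  simp only [auxW]
  rw [dif_neg h]
  rfl

/-- The test chain map `auxW B n ⟶ B`. -/
def auxF (B : ChainComplex (ModuleCat R) ℤ) (n : ℤ) : auxW R B n ⟶ B where
  f m :=
    if h : m = n then
      eqToHom (auxWX_eq R (Or.inl h)) ≫ (-eqToHom (congrArg B.X h.symm))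
    else if h' : m = n - 1 then
      eqToHom (auxWX_eq R (Or.inr h')) ≫ (-B.d n (n - 1)) ≫
        eqToHom (congrArg B.X (show n - 1 = m from h'.symm))
    else 0
  comm' i j hij := by
    simp only [ComplexShape.down_Rel] at hij
    by_cases hi : i = n
    · subst hi
      obtain rfl : j = i - 1 := by omega
      rw [dif_pos rfl, dif_neg (by omega), dif_pos rfl, auxW_d_pos]
      simp
      have gen : ∀ {X Y Z W : ModuleCat R} (a : X = Y) (b : Z = Y) (f : Y ⟶ W),
          -eqToHom a ≫ f = eqToHom (a.trans b.symm) ≫ (-eqToHom b ≫ f) := by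
        intros; subst_vars; simp
      exact gen _ _ _
    · by_cases hi' : i = n - 1
      · subst hi'
        obtain rfl : j = n - 2 := by omega
        rw [dif_neg hi, dif_pos rfl, dif_neg (by omega), dif_neg (by omega),
          auxW_d_neg R n (by omega)]
        have : B.d n (n - 1) ≫ B.d (n - 1) (n - 2) = 0 := B.d_comp_d _ _ _
        simp [this]
      · rw [dif_neg hi, dif_neg hi', auxW_d_neg R n (by intro h; exact hi h.1)]
        simp

/-- The test homotopy. -/
def auxS (B : ChainComplex (ModuleCat R) ℤ) (n : ℤ) (m : ℤ) :
    (auxW R B n).X m ⟶ B.X (m + 1) :=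
  if h : m = n - 1 then
    eqToHom (auxWX_eq R (Or.inr h)) ≫ eqToHom (congrArg B.X (show n = m + 1 by omega))
  else 0

lemma auxS_homotopy {E B : ChainComplex (ModuleCat R) ℤ} (p : E ⟶ B) (n : ℤ) :
    IsHomotopy R ((0 : auxW R B n ⟶ E) ≫ p) (auxF R B n) (auxS R B n) := by
  intro m
  simp only [HomologicalComplex.comp_f, HomologicalComplex.zero_f_apply, Limits.zero_comp,
    zero_sub]
  by_cases hm : m = n
  · subst hm
    rw [auxW_d_pos]
    simp only [auxS, dif_neg (show ¬(m : ℤ) = m - 1 by omega), dif_pos rfl, Limits.zero_comp,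
      zero_add]
    simp [auxF]
    exact eqToHom_trans _ _
  · by_cases hm' : m = n - 1
    · subst hm'
      rw [auxW_d_neg R n (by omega)]
      simp only [auxS, dif_pos rfl, Limits.zero_comp, add_zero, Limits.comp_zero]
      simp [auxF, dif_neg (show ¬(n : ℤ) - 1 = n by omega)]
    · rw [auxW_d_neg R n (by intro h; exact hm h.1)]
      simp [auxS, dif_neg hm, dif_neg hm', auxF]

/-- A chain map satisfies the covering homotopy property iff it is a degreewise split
epimorphism. -/
theorem statement5 (R : Type) [Ring R] {E B : ChainComplex (ModuleCat R) ℤ} (p : E ⟶ B) :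
    (∀ (W : ChainComplex (ModuleCat R) ℤ) (g : W ⟶ E) (f : W ⟶ B)
      (s : ∀ n : ℤ, W.X n ⟶ B.X (n + 1)), IsHomotopy R (g ≫ p) f s →
      ∃ (g' : W ⟶ E) (t : ∀ n : ℤ, W.X n ⟶ E.X (n + 1)),
        g' ≫ p = f ∧ IsHomotopy R g g' t ∧ ∀ n : ℤ, t n ≫ p.f (n + 1) = s n) ↔
    DegSplitEpi R p := by
  constructor
  · -- CHP → split epi
    intro h n
    obtain ⟨g', t, hp, ht, hs⟩ := h (auxW R B n) 0 (auxF R B n) (auxS R B n)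
      (auxS_homotopy R p n)
    have key := hs (n - 1)
    refine ⟨(eqToHom (auxWX_eq R (Or.inr rfl)).symm ≫ t (n - 1) ≫
      eqToHom (congrArg E.X (show n - 1 + 1 = n by omega)) : B.X n ⟶ E.X n).hom, fun b => ?_⟩
    have comp : ((eqToHom (auxWX_eq R (Or.inr rfl)).symm : B.X n ⟶ (auxW R B n).X (n - 1)) ≫ t (n - 1) ≫
        eqToHom (congrArg E.X (show n - 1 + 1 = n by omega))) ≫ p.f n = 𝟙 (B.X n) := by
      rw [Category.assoc, Category.assoc, aux_f_eqToHom R p (show n - 1 + 1 = n by omega)]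
      slice_lhs 2 3 => rw [key]
      simp [auxS, dif_pos rfl]
      exact (eqToHom_trans _ _).trans (eqToHom_refl _ _)
    have := congrArg (fun φ : B.X n ⟶ B.X n => φ b) comp
    exact this
  · -- split epi → CHP
    intro hsec W g f s hs
    choose σ hσ using hsec
    have hσ' : ∀ m : ℤ, ModuleCat.ofHom (σ m) ≫ p.f m = 𝟙 (B.X m) := by
      intro m
      ext b
      exact hσ m b
    set t : ∀ m : ℤ, W.X m ⟶ E.X (m + 1) :=
      fun m => s m ≫ ModuleCat.ofHom (σ (m + 1)) with ht_def
    have htp : ∀ m : ℤ, t m ≫ p.f (m + 1) = s m := by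
      intro m
      rw [ht_def]
      dsimp only
      rw [Category.assoc, hσ' (m + 1), Category.comp_id]
    refine ⟨{
      f := fun m => g.f m - (t m ≫ E.d (m + 1) m +
        W.d m (m - 1) ≫ t (m - 1) ≫ eqToHom (congrArg E.X (show m - 1 + 1 = m by omega)))
      comm' := ?_ }, t, ?_, ?_, htp⟩
    · intro i j hij
      simp only [ComplexShape.down_Rel] at hij
      subst hij
      rw [aux_t_eq R t (show (j : ℤ) + 1 - 1 = j by omega),
        aux_d_eq R (show (j : ℤ) + 1 = j + 1 from rfl) (show (j : ℤ) + 1 - 1 = j by omega)]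
      simp only [Preadditive.sub_comp, Preadditive.comp_sub, Preadditive.add_comp,
        Preadditive.comp_add, Category.assoc, eqToHom_trans, eqToHom_refl, Category.comp_id,
        Category.id_comp, eqToHom_trans_assoc, HomologicalComplex.d_comp_d,
        HomologicalComplex.d_comp_d_assoc, Limits.comp_zero, Limits.zero_comp, g.comm]
      abel
    · refine HomologicalComplex.hom_ext _ _ fun m => ?_
      have hcomm : E.d (m + 1) m ≫ p.f m = p.f (m + 1) ≫ B.d (m + 1) m := (p.comm _ _).symm
      have hEq : eqToHom (congrArg E.X (show m - 1 + 1 = m by omega)) ≫ p.f m =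
          p.f (m - 1 + 1) ≫ eqToHom (congrArg B.X (show m - 1 + 1 = m by omega)) :=
        aux_f_eqToHom R p (by omega)
      have hgp := hs m
      simp only [HomologicalComplex.comp_f] at hgp ⊢
      simp only [Preadditive.sub_comp, Preadditive.add_comp, Category.assoc, hcomm, hEq]
      rw [← Category.assoc (t m), htp m]
      have h3 : W.d m (m - 1) ≫ t (m - 1) ≫ p.f (m - 1 + 1) ≫
          eqToHom (congrArg B.X (show m - 1 + 1 = m by omega)) =
          W.d m (m - 1) ≫ s (m - 1) ≫ eqToHom (congrArg B.X (show m - 1 + 1 = m by omega)) := by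
        rw [← Category.assoc (t (m - 1)), htp (m - 1)]
      rw [h3, sub_eq_iff_eq_add, hgp]
      abel
    · intro m
      dsimp only
      rw [sub_sub_cancel]
end

section
/- Let R be a ring. A chain map i : W → X of chain complexes of R-modules satisfies the homotopy extension property — meaning: for every chain complex B, chain maps f : X → B and g : W → B, and chain homotopy s from f ∘ i to g, there exist a chain map f' : X → B with f' ∘ i = g and a chain homotopy s̃ from f to f' such that s̃_n ∘ i_n = s_n for all n — if and only if i is a degreewise split monomorphism. -/
open CategoryTheory

variable (R : Type) [Ring R]

namespace Statement6Aux

variable {R : Type} [Ring R]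

lemma d_d (K : ChainComplex (ModuleCat R) ℤ) (a b c : ℤ) (x : K.X a) :
    K.d b c (K.d a b x) = 0 :=
  by rw [← ConcreteCategory.comp_apply, K.d_comp_d]; rfl

lemma eqToHom_X_d (K : ChainComplex (ModuleCat R) ℤ) {a b : ℤ} (h : a = b)
    (p : K.X a = K.X b) (c : ℤ) (x : K.X a) :
    K.d b c (eqToHom p x) = K.d a c x := by
  subst h; rfl

lemma d_eqToHom_X (K : ChainComplex (ModuleCat R) ℤ) (a : ℤ) {b c : ℤ} (h : b = c)
    (p : K.X b = K.X c) (x : K.X a) :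
    eqToHom p (K.d a b x) = K.d a c x := by
  subst h; rfl

lemma eqToHom_X_eqToHom_X (K : ChainComplex (ModuleCat R) ℤ) {a b c : ℤ} (h : a = b)
    (h' : b = c) (p : K.X a = K.X b) (p' : K.X b = K.X c) (x : K.X a) :
    eqToHom p' (eqToHom p x) = eqToHom (congrArg K.X (h.trans h')) x := by
  subst h h'; rfl

lemma eqToHom_X_self (K : ChainComplex (ModuleCat R) ℤ) {a : ℤ} (p : K.X a = K.X a)
    (x : K.X a) : eqToHom p x = x := rfl

lemma eqToHom_comp_d (K : ChainComplex (ModuleCat R) ℤ) {a b : ℤ} (h : a = b)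
    (p : K.X a = K.X b) (c : ℤ) :
    (eqToHom p : K.X a ⟶ K.X b) ≫ K.d b c = K.d a c := by
  subst h; simp

variable (W : ChainComplex (ModuleCat R) ℤ)

/-- The degree-`n` part of the cone of the identity of `W`. -/
def coneX (n : ℤ) : ModuleCat R := ModuleCat.of R (W.X (n - 1) × W.X n)

/-- The differential of the cone of the identity of `W`. -/
def coneD (n : ℤ) : coneX W n ⟶ coneX W (n - 1) :=
  ModuleCat.ofHom (LinearMap.prod (-((W.d (n - 1) (n - 1 - 1)).hom.comp (LinearMap.fst R _ _)))
    (LinearMap.fst R _ _ + (W.d n (n - 1)).hom.comp (LinearMap.snd R _ _)))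

lemma coneD_apply (n : ℤ) (x : coneX W n) :
    coneD W n x = (-(W.d (n - 1) (n - 1 - 1) x.1), x.1 + W.d n (n - 1) x.2) := rfl

lemma eqToHom_coneX {a b : ℤ} (h : a = b) (p : coneX W a = coneX W b) (x : coneX W a) :
    eqToHom p x =
      (eqToHom (congrArg W.X (show a - 1 = b - 1 by rw [h])) x.1,
       eqToHom (congrArg W.X h) x.2) := by
  subst h; rfl

lemma coneD_coneD (n : ℤ) : coneD W n ≫ coneD W (n - 1) = 0 := by
  ext x
  have h1 : W.d (n - 1 - 1) (n - 1 - 1 - 1) (W.d (n - 1) (n - 1 - 1) x.1) = 0 := d_d W _ _ _ _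
  have h2 : W.d (n - 1) (n - 1 - 1) (W.d n (n - 1) x.2) = 0 := d_d W _ _ _ _
  show coneD W (n - 1) (coneD W n x) = 0
  rw [coneD_apply, coneD_apply]
  dsimp
  rw [map_neg, h1, map_add, h2]
  simp; rfl

lemma eqToHom_comp_coneD_assoc {a b : ℤ} (h : a = b) (p : coneX W a = coneX W b)
    {Z : ModuleCat R} (u : coneX W (b - 1) ⟶ Z) :
    (eqToHom p : coneX W a ⟶ coneX W b) ≫ coneD W b ≫ u =
      coneD W a ≫
        ((eqToHom (congrArg (coneX W) (show a - 1 = b - 1 by rw [h]))) ≫ u) := by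
  subst h; simp

/-- The cone of the identity of `W`. -/
def Cone : ChainComplex (ModuleCat R) ℤ where
  X := coneX W
  d n m :=
    if h : m + 1 = n then
      coneD W n ≫ eqToHom (congrArg (coneX W) (show n - 1 = m by omega))
    else 0
  shape n m h := dif_neg h
  d_comp_d' n m k h1 h2 := by
    have h1' : m + 1 = n := h1
    have h2' : k + 1 = m := h2
    rw [dif_pos h1', dif_pos h2']
    simp only [Category.assoc]
    rw [eqToHom_comp_coneD_assoc W (show n - 1 = m by omega),
      ← Category.assoc, coneD_coneD]
    simp

lemma Cone_d (n m : ℤ) (h : m + 1 = n) :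
    (Cone W).d n m = coneD W n ≫ eqToHom (congrArg (coneX W) (show n - 1 = m by omega)) :=
  dif_pos h

lemma Cone_d_apply (n m : ℤ) (h : m + 1 = n) (x : coneX W n) :
    (Cone W).d n m x =
      (eqToHom (congrArg W.X (show n - 1 - 1 = m - 1 by omega))
          (-(W.d (n - 1) (n - 1 - 1) x.1)),
        eqToHom (congrArg W.X (show n - 1 = m by omega)) (x.1 + W.d n (n - 1) x.2)) := by
  rw [Cone_d W n m h]
  show (eqToHom (congrArg (coneX W) (show n - 1 = m by omega)) :
      coneX W (n - 1) ⟶ coneX W m) (coneD W n x) = _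
  rw [coneD_apply]
  exact eqToHom_coneX W (show n - 1 = m by omega) _ _

/-- The inclusion of `W` into the cone. -/
def coneG : W ⟶ Cone W where
  f n := ModuleCat.ofHom (LinearMap.prod 0 LinearMap.id)
  comm' n m hrel := by
    have h : m + 1 = n := hrel
    ext w
    show (Cone W).d n m (((0 : W.X (n - 1)), w) : coneX W n) =
      (((0 : W.X (m - 1)), W.d n m w) : coneX W m)
    refine (Cone_d_apply W n m h _).trans ?_
    simp [d_eqToHom_X W n (show n - 1 = m by omega)]
    rfl

end Statement6Aux

open Statement6Aux

/-- A chain map satisfies the homotopy extension property iff it is a degreewise split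
monomorphism. -/
theorem statement6 (R : Type) [Ring R] {W X : ChainComplex (ModuleCat R) ℤ} (i : W ⟶ X) :
    (∀ (B : ChainComplex (ModuleCat R) ℤ) (f : X ⟶ B) (g : W ⟶ B)
      (s : ∀ n : ℤ, W.X n ⟶ B.X (n + 1)), IsHomotopy R (i ≫ f) g s →
      ∃ (f' : X ⟶ B) (t : ∀ n : ℤ, X.X n ⟶ B.X (n + 1)),
        i ≫ f' = g ∧ IsHomotopy R f f' t ∧ ∀ n : ℤ, i.f n ≫ t n = s n) ↔
    DegSplitMono R i := by
  constructor
  · -- HEP → degreewise split mono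
    intro hep
    set s : ∀ n : ℤ, W.X n ⟶ (Cone W).X (n + 1) := fun n =>
      ModuleCat.ofHom (LinearMap.prod
        (-(eqToHom (congrArg W.X (show n = n + 1 - 1 by omega)) : W.X n ⟶ W.X (n + 1 - 1))).hom
        0) with hs_def
    have hs : IsHomotopy R (i ≫ (0 : X ⟶ Cone W)) (coneG W) s := by
      intro n
      ext w
      have h1 : s n w =
          ((-(eqToHom (congrArg W.X (show n = n + 1 - 1 by omega)) w) : W.X (n + 1 - 1)),
            (0 : W.X (n + 1))) := rfl
      have h2 : s (n - 1) (W.d n (n - 1) w) =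
          ((-(eqToHom (congrArg W.X (show n - 1 = n - 1 + 1 - 1 by omega))
              (W.d n (n - 1) w)) : W.X (n - 1 + 1 - 1)),
            (0 : W.X (n - 1 + 1))) := rfl
      have hadd : ((s n ≫ (Cone W).d (n + 1) n + W.d n (n - 1) ≫ s (n - 1) ≫
            eqToHom (congrArg (Cone W).X (show n - 1 + 1 = n by omega))) w :
              (Cone W).X n) =
          (s n ≫ (Cone W).d (n + 1) n) w + (W.d n (n - 1) ≫ s (n - 1) ≫
            eqToHom (congrArg (Cone W).X (show n - 1 + 1 = n by omega))) w := rfl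
      have key1 : (s n ≫ (Cone W).d (n + 1) n) w =
          ((W.d n (n - 1) w, -w) : coneX W n) := by
        show (Cone W).d (n + 1) n (s n w) = ((W.d n (n - 1) w, -w) : coneX W n)
        rw [h1]
        refine (Cone_d_apply W (n + 1) n rfl _).trans ?_
        simp only [LinearMap.neg_apply, map_neg, map_zero, neg_neg, add_zero,
          eqToHom_X_d W (show n = n + 1 - 1 by omega),
          d_eqToHom_X W n (show n + 1 - 1 - 1 = n - 1 by omega),
          eqToHom_X_eqToHom_X W (show n = n + 1 - 1 by omega)
            (show n + 1 - 1 = n by omega),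
          eqToHom_X_self]
        rfl
      have key2 : (W.d n (n - 1) ≫ s (n - 1) ≫
            eqToHom (congrArg (Cone W).X (show n - 1 + 1 = n by omega))) w =
          ((-(W.d n (n - 1) w), (0 : W.X n)) : coneX W n) := by
        show (eqToHom (congrArg (coneX W) (show n - 1 + 1 = n by omega)) :
            coneX W (n - 1 + 1) ⟶ coneX W n) (s (n - 1) (W.d n (n - 1) w)) =
          ((-(W.d n (n - 1) w), (0 : W.X n)) : coneX W n)
        rw [h2]
        refine (eqToHom_coneX W (show n - 1 + 1 = n by omega) _ _).trans ?_
        simp only [LinearMap.neg_apply, map_neg, map_zero, neg_neg,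
          eqToHom_X_eqToHom_X W (show n - 1 = n - 1 + 1 - 1 by omega)
            (show n - 1 + 1 - 1 = n - 1 by omega),
          eqToHom_X_self]
        rfl
      have hrhs : (((i ≫ (0 : X ⟶ Cone W)).f n - (coneG W).f n) w : (Cone W).X n) =
          (0 : (Cone W).X n) - (coneG W).f n w := rfl
      have hg : ((coneG W).f n w : (Cone W).X n) =
          (((0 : W.X (n - 1)), w) : coneX W n) := rfl
      rw [hadd, key1, key2, hrhs, hg]
      refine Prod.ext ?_ ?_
      · show W.d n (n - 1) w + -(W.d n (n - 1) w) = (0 : W.X (n - 1)) - (0 : W.X (n - 1))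
        simp
      · show -w + (0 : W.X n) = (0 : W.X n) - w
        simp
    obtain ⟨f', t, hif', -, -⟩ := hep (Cone W) 0 (coneG W) s hs
    intro n
    refine ⟨(LinearMap.snd R (W.X (n - 1)) (W.X n)).comp (f'.f n).hom, fun w => ?_⟩
    have hfi : f'.f n (i.f n w) = (coneG W).f n w := by
      have := congrArg (fun (u : W ⟶ Cone W) => (HomologicalComplex.Hom.f u n) w) hif'
      simpa using this
    show ((f'.f n) (i.f n w)).2 = w
    rw [hfi]
    rfl
  · -- degreewise split mono → HEP
    intro hsplit B f g s hs
    choose r hr using hsplit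
    let rh : ∀ n : ℤ, X.X n ⟶ W.X n := fun n => ModuleCat.ofHom (r n)
    have hir : ∀ n, i.f n ≫ rh n = 𝟙 (W.X n) := fun n => by
      ext w; exact hr n w
    let t : ∀ n : ℤ, X.X n ⟶ B.X (n + 1) := fun n => rh n ≫ s n
    let corr : ∀ n : ℤ, X.X n ⟶ B.X n := fun n =>
      t n ≫ B.d (n + 1) n +
        X.d n (n - 1) ≫ t (n - 1) ≫ eqToHom (congrArg B.X (show n - 1 + 1 = n by omega))
    have hit : ∀ n, i.f n ≫ t n = s n := fun n => by
      show i.f n ≫ rh n ≫ s n = s n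
      rw [← Category.assoc, hir, Category.id_comp]
    have hicorr : ∀ n, i.f n ≫ corr n = (i ≫ f).f n - g.f n := fun n => by
      have h1 : i.f n ≫ X.d n (n - 1) = W.d n (n - 1) ≫ i.f (n - 1) := i.comm n (n - 1)
      show i.f n ≫ (t n ≫ B.d (n + 1) n +
        X.d n (n - 1) ≫ t (n - 1) ≫ eqToHom (congrArg B.X (show n - 1 + 1 = n by omega))) = _
      rw [Preadditive.comp_add, ← Category.assoc (i.f n) (t n), hit,
        ← Category.assoc (i.f n) (X.d n (n - 1)), h1, Category.assoc,
        ← Category.assoc (i.f (n - 1)) (t (n - 1)), hit, ← hs n]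
    have key : ∀ m : ℤ, ∀ a b : ℤ, a = b →
        X.d (m + 1) a ≫ t a ≫ B.d (a + 1) m =
          X.d (m + 1) b ≫ t b ≫ B.d (b + 1) m := by
      rintro m a b rfl; rfl
    let f' : X ⟶ B :=
      { f := fun n => f.f n - corr n
        comm' := fun n m hnm => by
          obtain rfl := hnm
          have hcomm := f.comm (m + 1) m
          rw [Preadditive.sub_comp, Preadditive.comp_sub, hcomm]
          congr 1
          have hcorr_eq : X.d (m + 1) (m + 1 - 1) ≫ t (m + 1 - 1) ≫
              (eqToHom (congrArg B.X (show m + 1 - 1 + 1 = m + 1 by omega)) ≫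
                B.d (m + 1) m) =
              X.d (m + 1) m ≫ t m ≫ B.d (m + 1) m := by
            rw [eqToHom_comp_d B (show m + 1 - 1 + 1 = m + 1 by omega)]
            exact key m (m + 1 - 1) m (by omega)
          show (t (m + 1) ≫ B.d (m + 1 + 1) (m + 1) +
              X.d (m + 1) (m + 1 - 1) ≫ t (m + 1 - 1) ≫
                eqToHom (congrArg B.X (show m + 1 - 1 + 1 = m + 1 by omega))) ≫
                B.d (m + 1) m =
            X.d (m + 1) m ≫ (t m ≫ B.d (m + 1) m +
              X.d m (m - 1) ≫ t (m - 1) ≫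
                eqToHom (congrArg B.X (show m - 1 + 1 = m by omega)))
          rw [Preadditive.add_comp, Preadditive.comp_add,
            Category.assoc (t (m + 1)), HomologicalComplex.d_comp_d, Limits.comp_zero,
            zero_add, Category.assoc, Category.assoc, hcorr_eq,
            ← Category.assoc (X.d (m + 1) m) (X.d m (m - 1)),
            HomologicalComplex.d_comp_d, Limits.zero_comp, add_zero] }
    refine ⟨f', t, HomologicalComplex.hom_ext _ _ fun n => ?_, fun n => ?_, hit⟩
    · show i.f n ≫ (f.f n - corr n) = g.f n
      rw [Preadditive.comp_sub, hicorr n, ← HomologicalComplex.comp_f, sub_sub_cancel]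
    · show t n ≫ B.d (n + 1) n +
          X.d n (n - 1) ≫ t (n - 1) ≫
            eqToHom (congrArg B.X (show n - 1 + 1 = n by omega)) =
        f.f n - (f.f n - corr n)
      rw [sub_sub_cancel]
end
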